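/- Let m₀, w₀ be 2×2 matrices over a field of characteristic 2, m₁ = w₀m₀, w₁ = m₀w₀, d = det(m₁), r = trace(m₁), co = m₁ + w₁ + r·I, and assume r and co are invertible (as needed). Define the Thue–Morse iteration mₖ₊₁ = wₖmₖ, wₖ₊₁ = mₖwₖ. Then m₃ = (m₁ + (d/co) + (d²/(r·co²)))·l where l = r·co² (note co² is scalar, so these quotients make sense). -/
import Mathlib


lemma ch2 {K : Type*} [Field K] [CharP K 2] (A : Matrix (Fin 2) (Fin 2) K) :
    A * A = A.trace • A + A.det • (1 : Matrix (Fin 2) (Fin 2) K) := by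
  have h : A * A = A.trace • A - A.det • (1 : Matrix (Fin 2) (Fin 2) K) := by
    rw [← Matrix.ext_iff, Fin.forall_fin_two]
    constructor <;> rw [Fin.forall_fin_two] <;> constructor <;>
      simp [Matrix.mul_apply, Fin.sum_univ_two, Matrix.trace_fin_two,
        Matrix.det_fin_two, Matrix.one_apply] <;> ring
  rw [h, sub_eq_add_neg, ← neg_smul, CharTwo.neg_eq]


/-- Key relation (⋆) for the Thue–Morse continued fraction.  Over a field `K`
of characteristic 2, let `m₀, w₀` be 2×2 matrices, `m₁ = w₀m₀`, `w₁ = m₀w₀`,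
`d = det m₁`, `r = trace m₁`, `co = m₁ + w₁ + r·I`, with the Thue–Morse
iteration `m₂ = w₁m₁`, `w₂ = m₁w₁`, `m₃ = w₂m₂`.  Suppose `r ≠ 0` and
`co² = s·I` is a nonzero scalar matrix (so `co⁻¹ = s⁻¹·co`,
`(co²)⁻¹ = s⁻¹·I`).  Then
`m₃ = (m₁ + d·co⁻¹ + d²·r⁻¹·(co²)⁻¹)·(r·co²)`. -/
theorem thueMorse_key_relation {K : Type*} [Field K] [CharP K 2]
    (m₀ w₀ m₁ w₁ m₂ w₂ m₃ co : Matrix (Fin 2) (Fin 2) K) (d r s : K)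
    (hm1 : m₁ = w₀ * m₀) (hw1 : w₁ = m₀ * w₀)
    (hd : d = m₁.det) (hr : r = m₁.trace)
    (hco : co = m₁ + w₁ + r • (1 : Matrix (Fin 2) (Fin 2) K))
    (hm2 : m₂ = w₁ * m₁) (hw2 : w₂ = m₁ * w₁) (hm3 : m₃ = w₂ * m₂)
    (hrne : r ≠ 0) (hsne : s ≠ 0)
    (hs : co * co = s • (1 : Matrix (Fin 2) (Fin 2) K)) :
    m₃ = (m₁ + (d * s⁻¹) • co +
        (d ^ 2 * r⁻¹ * s⁻¹) • (1 : Matrix (Fin 2) (Fin 2) K)) *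
      ((r * s) • (1 : Matrix (Fin 2) (Fin 2) K)) := by
  have haddM : ∀ A : Matrix (Fin 2) (Fin 2) K, A + A = 0 := fun A => by
    ext i j; simpa using CharTwo.add_self_eq_zero (A i j)
  -- trace and det of w₁ equal those of m₁
  have htw : w₁.trace = r := by
    rw [hr, hm1, hw1, Matrix.trace_mul_comm]
  have hdw : w₁.det = d := by
    rw [hd, hm1, hw1, Matrix.det_mul, Matrix.det_mul, mul_comm]
  have hchm : m₁ * m₁ = r • m₁ + d • (1 : Matrix (Fin 2) (Fin 2) K) := by
    rw [ch2 m₁, ← hr, ← hd]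
  have hchw : w₁ * w₁ = r • w₁ + d • (1 : Matrix (Fin 2) (Fin 2) K) := by
    rw [ch2 w₁, htw, hdw]
  -- m₁ * co = m₁ * w₁ + d • 1
  have hA : m₁ * co = m₁ * w₁ + d • (1 : Matrix (Fin 2) (Fin 2) K) := by
    rw [hco, mul_add, mul_add, hchm, mul_smul_comm, mul_one]
    calc r • m₁ + d • (1 : Matrix (Fin 2) (Fin 2) K) + m₁ * w₁ + r • m₁
        = (r • m₁ + r • m₁) + (m₁ * w₁ + d • 1) := by abel
      _ = m₁ * w₁ + d • 1 := by rw [haddM, zero_add]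
  -- co * m₁ = w₁ * m₁ + d • 1
  have hB : co * m₁ = w₁ * m₁ + d • (1 : Matrix (Fin 2) (Fin 2) K) := by
    rw [hco, add_mul, add_mul, hchm, smul_mul_assoc, one_mul]
    calc r • m₁ + d • (1 : Matrix (Fin 2) (Fin 2) K) + w₁ * m₁ + r • m₁
        = (r • m₁ + r • m₁) + (w₁ * m₁ + d • 1) := by abel
      _ = w₁ * m₁ + d • 1 := by rw [haddM, zero_add]
  -- co * w₁ = m₁ * w₁ + d • 1
  have hC : co * w₁ = m₁ * w₁ + d • (1 : Matrix (Fin 2) (Fin 2) K) := by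
    rw [hco, add_mul, add_mul, hchw, smul_mul_assoc, one_mul]
    calc m₁ * w₁ + (r • w₁ + d • (1 : Matrix (Fin 2) (Fin 2) K)) + r • w₁
        = (r • w₁ + r • w₁) + (m₁ * w₁ + d • 1) := by abel
      _ = m₁ * w₁ + d • 1 := by rw [haddM, zero_add]
  -- m₁ * w₁ = co * w₁ + d • 1, and w₁ * m₁ = co * m₁ + d • 1
  have hmw : m₁ * w₁ = co * w₁ + d • (1 : Matrix (Fin 2) (Fin 2) K) := by
    rw [hC, add_assoc, haddM, add_zero]
  have hwm : w₁ * m₁ = co * m₁ + d • (1 : Matrix (Fin 2) (Fin 2) K) := by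
    rw [hB, add_assoc, haddM, add_zero]
  -- m₁ w₁ m₁ = s•m₁ + d•co + d•m₁
  have hkey : m₁ * w₁ * m₁ = s • m₁ + d • co + d • m₁ := by
    calc m₁ * w₁ * m₁ = (co * w₁ + d • 1) * m₁ := by rw [← hmw]
      _ = co * (w₁ * m₁) + d • m₁ := by
          rw [add_mul, smul_mul_assoc, one_mul, mul_assoc]
      _ = co * (co * m₁ + d • 1) + d • m₁ := by rw [hwm]
      _ = co * co * m₁ + d • co + d • m₁ := by
          rw [mul_add, mul_smul_comm, mul_one, mul_assoc]
      _ = s • m₁ + d • co + d • m₁ := by rw [hs, smul_mul_assoc, one_mul]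
  -- m₃ = (r*s)•m₁ + (r*d)•co + (d^2)•1
  have hfinal : m₃ = (r * s) • m₁ + (r * d) • co + (d ^ 2) • (1 : Matrix (Fin 2) (Fin 2) K) := by
    calc m₃ = m₁ * (w₁ * w₁) * m₁ := by
          rw [hm3, hw2, hm2]; noncomm_ring
      _ = m₁ * (r • w₁ + d • 1) * m₁ := by rw [hchw]
      _ = r • (m₁ * w₁ * m₁) + d • (m₁ * m₁) := by
          rw [mul_add, add_mul]
          rw [mul_smul_comm, smul_mul_assoc, mul_smul_comm, smul_mul_assoc, mul_one]
      _ = r • (s • m₁ + d • co + d • m₁) + d • (r • m₁ + d • 1) := by rw [hkey, hchm]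
      _ = (r * s) • m₁ + (r * d) • co + ((r * d) • m₁ + (r * d) • m₁) + (d ^ 2) • 1 := by
          simp only [smul_add, smul_smul]
          rw [show d * r = r * d from mul_comm d r, show d * d = d ^ 2 by ring]
          abel
      _ = (r * s) • m₁ + (r * d) • co + (d ^ 2) • 1 := by rw [haddM, add_zero]
  rw [hfinal]
  rw [add_mul, add_mul, smul_mul_smul_comm, smul_mul_smul_comm, mul_one, mul_one,
    Matrix.mul_smul, mul_one]
  match_scalars <;> field_simp <;> ring
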